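/- Let (X, 𝒳) be a measurable space with finite atomless measure λ, let q_n → ∞ monotonically, let (C_n^k)_{k=1,…,K_n} be finite measurable partitions of X, and let E_{q_n} be Poisson point processes with intensity q_n λ. Let r_n → r ∈ [0, ∞) be monotone with √(K_n/q_n) ∈ o(r_n) and √(log n / q_n) ∈ o(r_n). Then (1/r_n) Σ_{k=1}^{K_n} |E_{q_n}(C_n^k)/q_n − λ(C_n^k)| → 0 almost surely as n → ∞. -/

import Mathlib

open MeasureTheory ProbabilityTheory Filter Topology Real NNReal ENNReal

lemma aux_hasSum (p : ℝ≥0) (u : ℝ) :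
    HasSum (fun n : ℕ => poissonPMFReal p n * Real.exp (u * n))
      (Real.exp ((p : ℝ) * (Real.exp u - 1))) := by
  have h : (fun n : ℕ => poissonPMFReal p n * Real.exp (u * n))
      = fun n : ℕ => Real.exp (-(p:ℝ)) * (((p:ℝ) * Real.exp u) ^ n / n.factorial) := by
    funext n
    rw [poissonPMFReal, mul_pow, ← Real.exp_nat_mul, mul_comm (n:ℝ) u]
    ring
  have h2 : HasSum (fun n : ℕ => ((p:ℝ) * Real.exp u) ^ n / n.factorial)
      (Real.exp ((p:ℝ) * Real.exp u)) := by
    rw [Real.exp_eq_exp_ℝ]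
    exact NormedSpace.expSeries_div_hasSum_exp _
  have h3 := h2.mul_left (Real.exp (-(p:ℝ)))
  rw [← Real.exp_add] at h3
  have he : -(p:ℝ) + (p:ℝ) * Real.exp u = (p:ℝ) * (Real.exp u - 1) := by ring
  rw [he] at h3
  exact h ▸ h3

lemma aux_term_nonneg (p : ℝ≥0) (u : ℝ) (n : ℕ) :
    0 ≤ poissonPMFReal p n * Real.exp (u * n) :=
  mul_nonneg poissonPMFReal_nonneg (Real.exp_nonneg _)

lemma aux_key (p : ℝ≥0) (u : ℝ) (n : ℕ) :
    (‖Real.exp (u * n)‖₊ : ℝ≥0∞) * (poissonMeasure p) {n}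
      = ENNReal.ofReal (poissonPMFReal p n * Real.exp (u * n)) := by
  rw [show (poissonMeasure p) {n} = poissonPMF p n from
    by rw [poissonMeasure_singleton, ← poissonPMFReal_ofReal_eq_poissonPMF]; rfl]
  show _ * ENNReal.ofReal (poissonPMFReal p n) = _
  rw [ENNReal.ofReal_mul poissonPMFReal_nonneg, mul_comm]
  congr 1
  rw [← ENNReal.ofReal_coe_nnreal]
  congr 1
  simp [Real.nnnorm_of_nonneg (Real.exp_nonneg _), Real.coe_toNNReal _ (Real.exp_nonneg _)]

lemma aux_integrable (p : ℝ≥0) (u : ℝ) :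
    Integrable (fun n : ℕ => Real.exp (u * n)) (poissonMeasure p) := by
  constructor
  · exact (measurable_from_top (f := fun n : ℕ => Real.exp (u * n))).aestronglyMeasurable
  · rw [HasFiniteIntegral, lintegral_countable']
    calc ∑' n : ℕ, (‖Real.exp (u * n)‖₊ : ℝ≥0∞) * (poissonMeasure p) {n}
        = ∑' n : ℕ, ENNReal.ofReal (poissonPMFReal p n * Real.exp (u * n)) :=
          tsum_congr (aux_key p u)
      _ = ENNReal.ofReal (∑' n : ℕ, poissonPMFReal p n * Real.exp (u * n)) :=
          (ENNReal.ofReal_tsum_of_nonneg (aux_term_nonneg p u) (aux_hasSum p u).summable).symm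
      _ < ⊤ := ENNReal.ofReal_lt_top

lemma aux_integral (p : ℝ≥0) (u : ℝ) :
    ∫ n : ℕ, Real.exp (u * n) ∂(poissonMeasure p)
      = Real.exp ((p : ℝ) * (Real.exp u - 1)) := by
  rw [integral_poissonMeasure' (aux_integrable p u)]
  rw [← (aux_hasSum p u).tsum_eq]
  apply tsum_congr
  intro n
  rw [smul_eq_mul]
  congr 1

lemma aux_mgf {Ω : Type*} [MeasurableSpace Ω] {P : Measure Ω} {N : Ω → ℕ}
    (hN : Measurable N) {p : ℝ≥0} (hlaw : Measure.map N P = poissonMeasure p) (c θ : ℝ) :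
    Integrable (fun ω => Real.exp (θ * (c * (N ω : ℝ)))) P ∧
      mgf (fun ω => c * (N ω : ℝ)) P θ = Real.exp ((p : ℝ) * (Real.exp (θ * c) - 1)) := by
  have hfun : (fun ω => Real.exp (θ * (c * (N ω : ℝ))))
      = (fun n : ℕ => Real.exp ((θ * c) * n)) ∘ N := by
    funext ω; simp only [Function.comp_apply]; ring_nf
  have hint : Integrable (fun ω => Real.exp (θ * (c * (N ω : ℝ)))) P := by
    rw [hfun]
    apply (integrable_map_measure ?_ hN.aemeasurable).mp
    · rw [hlaw]; exact aux_integrable p (θ * c)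
    · rw [hlaw]
      exact (measurable_from_top (f := fun n : ℕ => Real.exp ((θ*c) * n))).aestronglyMeasurable
  refine ⟨hint, ?_⟩
  rw [mgf]
  calc ∫ ω, Real.exp (θ * (c * (N ω : ℝ))) ∂P
      = ∫ n : ℕ, Real.exp ((θ * c) * n) ∂(Measure.map N P) := by
        have hsm : AEStronglyMeasurable (fun n : ℕ => Real.exp ((θ*c) * n)) (Measure.map N P) := by
          rw [hlaw]
          exact (measurable_from_top (f := fun n : ℕ => Real.exp ((θ*c) * n))).aestronglyMeasurable
        rw [integral_map hN.aemeasurable hsm]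
        apply integral_congr_ae; filter_upwards with ω; ring_nf
    _ = Real.exp ((p : ℝ) * (Real.exp (θ * c) - 1)) := by rw [hlaw]; exact aux_integral p (θ * c)

lemma aux_exp_quad {v : ℝ} (hv : |v| ≤ 1) : Real.exp v - 1 - v ≤ v ^ 2 := by
  have h := Real.exp_bound hv (by norm_num : (0:ℕ) < 2)
  have h2 : ∑ m ∈ Finset.range 2, v ^ m / m.factorial = 1 + v := by
    simp [Finset.sum_range_succ]
  rw [h2, sq_abs] at h
  norm_num [Nat.factorial] at h
  have := (abs_le.mp h).2
  nlinarith [sq_nonneg v]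

/-- The per-`n` tail bound via Chernoff over all sign patterns. -/
lemma aux_tail {Ω : Type*} [MeasurableSpace Ω] (P : Measure Ω) [IsProbabilityMeasure P]
    {K : ℕ} (N : Fin K → Ω → ℕ) (hNmeas : ∀ k, Measurable (N k))
    (p : Fin K → ℝ≥0)
    (hlaw : ∀ k, Measure.map (N k) P = poissonMeasure (p k))
    (hindep : iIndepFun N P)
    {q L a θ : ℝ}
    (hθ0 : 0 ≤ θ) (hθ1 : θ ≤ 1)
    (hsum : ∑ k, ((p k : ℝ)) ≤ q * L) :
    (P {ω | a * q < ∑ k, |(N k ω : ℝ) - (p k : ℝ)|}).toReal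
      ≤ 2 ^ K * Real.exp (-(θ * (a * q)) + θ ^ 2 * (q * L)) := by
  classical
  set σ : Finset (Fin K) → Fin K → ℝ := fun A k => if k ∈ A then 1 else -1 with hσ
  have hσ_abs : ∀ A k, |σ A k| = 1 := by
    intro A k; by_cases h : k ∈ A <;> simp [hσ, h]
  set Y : Finset (Fin K) → Ω → ℝ := fun A => ∑ k, fun ω => σ A k * (N k ω : ℝ) with hY
  set E : Finset (Fin K) → Set Ω :=
    fun A => {ω | a * q + ∑ k, σ A k * (p k : ℝ) ≤ Y A ω} with hE
  -- Step 1: inclusion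
  have hincl : {ω | a * q < ∑ k, |(N k ω : ℝ) - (p k : ℝ)|}
      ⊆ ⋃ A ∈ Finset.univ.powerset, E A := by
    intro ω hω
    simp only [Set.mem_setOf_eq] at hω
    set A : Finset (Fin K) := Finset.univ.filter (fun k => (p k : ℝ) ≤ (N k ω : ℝ)) with hA
    refine Set.mem_biUnion (Finset.mem_coe.mpr (Finset.mem_powerset.mpr (Finset.subset_univ A))) ?_
    have hkey : ∀ k, |(N k ω : ℝ) - (p k : ℝ)| = σ A k * ((N k ω : ℝ) - (p k : ℝ)) := by
      intro k
      by_cases h : (p k : ℝ) ≤ (N k ω : ℝ)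
      · have hk : k ∈ A := by simp [hA, h]
        rw [abs_of_nonneg (by linarith)]
        simp [hσ, hk]
      · have hk : k ∉ A := by simp [hA, h]
        rw [abs_of_neg (by push_neg at h; linarith)]
        simp [hσ, hk]
    show a * q + ∑ k, σ A k * (p k : ℝ) ≤ Y A ω
    have hYω : Y A ω = ∑ k, σ A k * (N k ω : ℝ) := by
      rw [hY]; exact Finset.sum_apply ω Finset.univ _
    have hsplit : ∑ k, |(N k ω : ℝ) - (p k : ℝ)|
        = (∑ k, σ A k * (N k ω : ℝ)) - ∑ k, σ A k * (p k : ℝ) := by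
      rw [← Finset.sum_sub_distrib]
      apply Finset.sum_congr rfl
      intro k _
      rw [hkey k]; ring
    rw [hYω]; linarith [hsplit ▸ hω]
  -- Step 2: per-subset Chernoff bound
  have hA_bound : ∀ A : Finset (Fin K),
      (P (E A)).toReal ≤ Real.exp (-(θ * (a * q)) + θ ^ 2 * (q * L)) := by
    intro A
    have hXmeas : ∀ k, Measurable (fun ω => σ A k * (N k ω : ℝ)) := fun k =>
      (measurable_from_top.comp (hNmeas k)).const_mul _
    have hXindep : iIndepFun
        (fun k (ω : Ω) => σ A k * (N k ω : ℝ)) P :=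
      hindep.comp (fun k (x : ℕ) => σ A k * (x : ℝ)) fun k => measurable_from_top
    have hmgf := fun k => aux_mgf (hNmeas k) (hlaw k) (σ A k) θ
    have h_int : Integrable (fun ω => Real.exp (θ * Y A ω)) P := by
      have := hXindep.integrable_exp_mul_sum (t := θ) hXmeas
        (s := Finset.univ) (fun k _ => (hmgf k).1)
      simpa [hY] using this
    have hchern := measure_ge_le_exp_mul_mgf (μ := P) (X := Y A)
      (a * q + ∑ k, σ A k * (p k : ℝ)) hθ0 h_int
    have hmgfY : mgf (Y A) P θ
        = Real.exp (∑ k, (p k : ℝ) * (Real.exp (θ * σ A k) - 1)) := by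
      rw [hY, hXindep.mgf_sum hXmeas, Real.exp_sum]
      exact Finset.prod_congr rfl fun k _ => (hmgf k).2
    refine le_trans hchern ?_
    rw [hmgfY, ← Real.exp_add]
    apply Real.exp_le_exp.mpr
    have hterm : ∀ k, (p k : ℝ) * (Real.exp (θ * σ A k) - 1) - θ * (σ A k * (p k : ℝ))
        ≤ (p k : ℝ) * θ ^ 2 := by
      intro k
      have habs : |θ * σ A k| ≤ 1 := by
        rw [abs_mul, hσ_abs A k, mul_one, abs_of_nonneg hθ0]; exact hθ1
      have hq2 := aux_exp_quad habs
      have hp0 : (0:ℝ) ≤ (p k : ℝ) := (p k).coe_nonneg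
      have hsq : (θ * σ A k) ^ 2 = θ ^ 2 := by
        rw [mul_pow, ← sq_abs (σ A k), hσ_abs A k]; ring
      nlinarith [hq2, hp0, hsq]
    have hsum2 : ∑ k, ((p k : ℝ) * (Real.exp (θ * σ A k) - 1) - θ * (σ A k * (p k : ℝ)))
        ≤ ∑ k, (p k : ℝ) * θ ^ 2 := Finset.sum_le_sum fun k _ => hterm k
    rw [Finset.sum_sub_distrib, ← Finset.mul_sum] at hsum2
    have hsum3 : ∑ k, (p k : ℝ) * θ ^ 2 ≤ θ ^ 2 * (q * L) := by
      rw [← Finset.sum_mul]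
      calc (∑ k, (p k : ℝ)) * θ ^ 2 ≤ (q * L) * θ ^ 2 := by
            apply mul_le_mul_of_nonneg_right hsum (sq_nonneg θ)
        _ = θ ^ 2 * (q * L) := by ring
    nlinarith [hsum2, hsum3]
  -- Step 3: union bound
  calc (P {ω | a * q < ∑ k, |(N k ω : ℝ) - (p k : ℝ)|}).toReal
      ≤ (∑ A ∈ Finset.univ.powerset, P (E A)).toReal := by
        apply ENNReal.toReal_le_toReal (measure_ne_top _ _)
          (by exact (ENNReal.sum_lt_top.mpr (fun A _ => measure_lt_top P (E A))).ne) |>.mpr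
        exact le_trans (measure_mono hincl) (measure_biUnion_finset_le _ _)
    _ = ∑ A ∈ Finset.univ.powerset, (P (E A)).toReal :=
        ENNReal.toReal_sum fun A _ => measure_ne_top _ _
    _ ≤ ∑ _A ∈ Finset.univ.powerset, Real.exp (-(θ * (a * q)) + θ ^ 2 * (q * L)) :=
        Finset.sum_le_sum fun A _ => hA_bound A
    _ = 2 ^ K * Real.exp (-(θ * (a * q)) + θ ^ 2 * (q * L)) := by
        rw [Finset.sum_const, Finset.card_powerset, Finset.card_univ, Fintype.card_fin,
          nsmul_eq_mul]
        push_cast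
        ring

theorem stmt_3 {X : Type*} [MeasurableSpace X] (lam : Measure X)
    [IsFiniteMeasure lam] [NullSingletonClass lam]
    {Ω : Type*} [MeasurableSpace Ω] (P : Measure Ω) [IsProbabilityMeasure P]
    (q : ℕ → NNReal) (hqpos : ∀ n, 0 < q n)
    (hqmono : Monotone fun n => (q n : ℝ))
    (hqtop : Tendsto (fun n => (q n : ℝ)) atTop atTop)
    (K : ℕ → ℕ) (C : ∀ n, Fin (K n) → Set X)
    (hCmeas : ∀ n k, MeasurableSet (C n k))
    (hCdisj : ∀ n, Pairwise (Function.onFun Disjoint (C n)))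
    (hCcover : ∀ n, (⋃ k, C n k) = Set.univ)
    (N : ∀ n, Fin (K n) → Ω → ℕ) (hNmeas : ∀ n k, Measurable (N n k))
    (hlaw : ∀ n k, Measure.map (N n k) P = poissonMeasure (q n * (lam (C n k)).toNNReal))
    (hindep : ∀ n, iIndepFun (N n) P)
    (r : ℕ → ℝ) (hrpos : ∀ n, 0 < r n) (rlim : ℝ) (hrlim : 0 ≤ rlim)
    (hrmono : Monotone r ∨ Antitone r)
    (hrtendsto : Tendsto r atTop (𝓝 rlim))
    (hK : Tendsto (fun n => Real.sqrt ((K n : ℝ) / (q n : ℝ)) / r n) atTop (𝓝 0))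
    (hlog : Tendsto (fun n : ℕ => Real.sqrt (Real.log (n : ℝ) / (q n : ℝ)) / r n) atTop (𝓝 0)) :
    ∀ᵐ ω ∂P,
      Tendsto (fun n =>
          (1 / r n) * ∑ k, |(N n k ω : ℝ) / (q n : ℝ) - (lam (C n k)).toReal|)
        atTop (𝓝 0) := by
  classical
  set L : ℝ := (lam Set.univ).toReal with hLdef
  have hL0 : 0 ≤ L := ENNReal.toReal_nonneg
  set R : ℝ := max (r 0) (rlim + 1) with hRdef
  have hR0 : 0 < R := lt_of_lt_of_le (hrpos 0) (le_max_left _ _)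
  have hrR : ∀ n, r n ≤ R := by
    intro n
    rcases hrmono with h | h
    · calc r n ≤ rlim := h.ge_of_tendsto hrtendsto n
        _ ≤ rlim + 1 := by linarith
        _ ≤ R := le_max_right _ _
    · exact le_trans (h (Nat.zero_le n)) (le_max_left _ _)
  have hLR : 0 < L + R := by linarith
  set c : ℝ := 1 / (4 * (L + R)) with hcdef
  have hc0 : 0 < c := by positivity
  have hq0 : ∀ n, (0:ℝ) < (q n : ℝ) := fun n => by exact_mod_cast hqpos n
  have hpsum : ∀ n, ∑ k, ((q n * (lam (C n k)).toNNReal : ℝ≥0) : ℝ) = (q n : ℝ) * L := by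
    intro n
    have hμ : ∑ k, lam (C n k) = lam Set.univ := by
      rw [← hCcover n, measure_iUnion (hCdisj n) (hCmeas n), tsum_fintype]
    calc ∑ k, ((q n * (lam (C n k)).toNNReal : ℝ≥0) : ℝ)
        = ∑ k, (q n : ℝ) * (lam (C n k)).toReal := by
          refine Finset.sum_congr rfl fun k _ => ?_
          push_cast
          rfl
      _ = (q n : ℝ) * ∑ k, (lam (C n k)).toReal := by rw [Finset.mul_sum]
      _ = (q n : ℝ) * L := by
          congr 1
          rw [hLdef, ← hμ, ENNReal.toReal_sum fun k _ => measure_ne_top _ _]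
  set u : ℕ → ℝ := fun n => (q n : ℝ) * r n ^ 2 with hu
  have hu0 : ∀ n, 0 < u n := fun n => mul_pos (hq0 n) (pow_pos (hrpos n) 2)
  have hK2 : Tendsto (fun n => (K n : ℝ) / u n) atTop (𝓝 0) := by
    have h := hK.mul hK
    rw [mul_zero] at h
    refine h.congr fun n => ?_
    rw [div_mul_div_comm, Real.mul_self_sqrt (by positivity), ← sq, hu, div_div]
  have hlog2 : Tendsto (fun n : ℕ => Real.log n / u n) atTop (𝓝 0) := by
    have h := hlog.mul hlog
    rw [mul_zero] at h
    refine h.congr fun n => ?_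
    rw [div_mul_div_comm, Real.mul_self_sqrt
      (div_nonneg (Real.log_natCast_nonneg n) (q n).coe_nonneg), ← sq, hu, div_div]
  -- the key claim
  have key : ∀ ε : ℝ, 0 < ε → ε ≤ 1 → ∀ᵐ ω ∂P, ∀ᶠ n in atTop,
      (∑ k, |(N n k ω : ℝ) / (q n : ℝ) - (lam (C n k)).toReal|) ≤ ε * r n := by
    intro ε hε hε1
    set Bad : ℕ → Set Ω := fun n =>
      {ω | (ε * r n) * (q n : ℝ)
        < ∑ k, |(N n k ω : ℝ) - ((q n * (lam (C n k)).toNNReal : ℝ≥0) : ℝ)|} with hBadDef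
    have htail : ∀ n, (P (Bad n)).toReal
        ≤ 2 ^ (K n) * Real.exp (-(c * ε ^ 2) * u n) := by
      intro n
      set θ : ℝ := ε * r n / (2 * (L + R)) with hθdef
      have hθ0 : 0 ≤ θ := le_of_lt (div_pos (mul_pos hε (hrpos n)) (by linarith))
      have hθ1 : θ ≤ 1 := by
        rw [hθdef, div_le_one (by linarith)]
        nlinarith [hrR n, hrpos n]
      have hb := aux_tail P (N n) (hNmeas n) _ (hlaw n) (hindep n) (a := ε * r n)
        (L := L) hθ0 hθ1 (le_of_eq (hpsum n))
      refine le_trans hb ?_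
      have hexp : -(θ * (ε * r n * (q n : ℝ))) + θ ^ 2 * ((q n : ℝ) * L)
          ≤ -(c * ε ^ 2) * u n := by
        have heq : -(c * ε ^ 2) * u n - (-(θ * (ε * r n * (q n : ℝ))) + θ ^ 2 * ((q n : ℝ) * L))
            = (q n : ℝ) * (ε * r n) ^ 2 * R / (4 * (L + R) ^ 2) := by
          rw [hθdef, hcdef, hu]
          field_simp
          try ring
        have hpos : 0 ≤ (q n : ℝ) * (ε * r n) ^ 2 * R / (4 * (L + R) ^ 2) := by positivity
        linarith [heq ▸ hpos]
      exact mul_le_mul_of_nonneg_left (Real.exp_le_exp.mpr hexp) (by positivity)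
    -- eventual bound by 1/n^2
    have hev1 : ∀ᶠ n in atTop, (K n : ℝ) * Real.log 2 ≤ (c * ε ^ 2 / 2) * u n := by
      have hδ : (0:ℝ) < (c * ε ^ 2 / 2) / Real.log 2 := by
        have := Real.log_pos one_lt_two
        positivity
      filter_upwards [hK2.eventually_lt_const hδ] with n hn
      have h1 : (K n : ℝ) < (c * ε ^ 2 / 2) / Real.log 2 * u n := by
        rw [div_lt_iff₀ (hu0 n)] at hn
        linarith
      have hlog2pos := Real.log_pos one_lt_two
      calc (K n : ℝ) * Real.log 2
          ≤ ((c * ε ^ 2 / 2) / Real.log 2 * u n) * Real.log 2 := by nlinarith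
        _ = (c * ε ^ 2 / 2) * u n := by field_simp
    have hev2 : ∀ᶠ n : ℕ in atTop, 2 * Real.log n ≤ (c * ε ^ 2 / 2) * u n := by
      have hδ : (0:ℝ) < c * ε ^ 2 / 4 := by positivity
      filter_upwards [hlog2.eventually_lt_const hδ] with n hn
      rw [div_lt_iff₀ (hu0 n)] at hn
      nlinarith [hu0 n]
    have hbound : ∀ᶠ n in atTop, (P (Bad n)).toReal ≤ 1 / (n : ℝ) ^ 2 := by
      filter_upwards [hev1, hev2, eventually_ge_atTop 1] with n h1 h2 h3
      have hn0 : (0:ℝ) < n := by exact_mod_cast h3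
      calc (P (Bad n)).toReal ≤ 2 ^ (K n) * Real.exp (-(c * ε ^ 2) * u n) := htail n
        _ = Real.exp ((K n : ℝ) * Real.log 2 + -(c * ε ^ 2) * u n) := by
            rw [Real.exp_add, Real.exp_nat_mul, Real.exp_log two_pos]
        _ ≤ Real.exp (-(2 * Real.log n)) := Real.exp_le_exp.mpr (by linarith)
        _ = 1 / (n : ℝ) ^ 2 := by
            rw [Real.exp_neg, two_mul, Real.exp_add, Real.exp_log hn0, one_div, sq]
    obtain ⟨n0, hn0⟩ := eventually_atTop.mp hbound
    have hsummable : Summable fun n => (P (Bad n)).toReal := by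
      apply (_root_.summable_nat_add_iff (f := fun n => (P (Bad n)).toReal) n0).mp
      have hs : Summable fun n : ℕ => 1 / ((n + n0 : ℕ) : ℝ) ^ 2 :=
        (_root_.summable_nat_add_iff (f := fun n : ℕ => 1 / (n : ℝ) ^ 2) n0).mpr
          (summable_one_div_nat_pow.mpr one_lt_two)
      exact Summable.of_nonneg_of_le (fun n => ENNReal.toReal_nonneg)
        (fun n => hn0 (n + n0) (by omega)) hs
    have htop : ∑' n, P (Bad n) ≠ ⊤ := by
      have h1 : ∀ n, P (Bad n) = ENNReal.ofReal ((P (Bad n)).toReal) := fun n =>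
        (ENNReal.ofReal_toReal (measure_ne_top _ _)).symm
      rw [tsum_congr h1,
        ← ENNReal.ofReal_tsum_of_nonneg (fun n => ENNReal.toReal_nonneg) hsummable]
      exact ENNReal.ofReal_ne_top
    filter_upwards [MeasureTheory.ae_eventually_notMem htop] with ω hω
    filter_upwards [hω] with n hn
    rw [hBadDef, Set.mem_setOf_eq, not_lt] at hn
    have hstep : ∑ k, |(N n k ω : ℝ) / (q n : ℝ) - (lam (C n k)).toReal|
        = (∑ k, |(N n k ω : ℝ) - ((q n * (lam (C n k)).toNNReal : ℝ≥0) : ℝ)|) / (q n : ℝ) := by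
      rw [Finset.sum_div]
      refine Finset.sum_congr rfl fun k _ => ?_
      have hc : ((q n * (lam (C n k)).toNNReal : ℝ≥0) : ℝ)
          = (q n : ℝ) * (lam (C n k)).toReal := by push_cast; rfl
      have h1 : (N n k ω : ℝ) / (q n : ℝ) - (lam (C n k)).toReal
          = ((N n k ω : ℝ) - (q n : ℝ) * (lam (C n k)).toReal) / (q n : ℝ) := by
        rw [_root_.sub_div, mul_div_cancel_left₀ _ (ne_of_gt (hq0 n))]
      rw [hc, h1, abs_div, abs_of_pos (hq0 n)]
    rw [hstep, div_le_iff₀ (hq0 n)]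
    linarith
  -- assemble
  have key' : ∀ᵐ ω ∂P, ∀ m : ℕ, ∀ᶠ n in atTop,
      (∑ k, |(N n k ω : ℝ) / (q n : ℝ) - (lam (C n k)).toReal|) ≤ (1 / ((m : ℝ) + 1)) * r n := by
    rw [ae_all_iff]
    intro m
    refine key _ (by positivity) ?_
    rw [div_le_one (by positivity)]
    have : (0:ℝ) ≤ m := Nat.cast_nonneg m
    linarith
  filter_upwards [key'] with ω hω
  rw [NormedAddCommGroup.tendsto_nhds_zero]
  intro ε hε
  obtain ⟨m, hm⟩ := exists_nat_one_div_lt hε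
  filter_upwards [hω m] with n hn
  have hS0 : 0 ≤ ∑ k, |(N n k ω : ℝ) / (q n : ℝ) - (lam (C n k)).toReal| :=
    Finset.sum_nonneg fun k _ => abs_nonneg _
  have h2 : (1 / r n) * ∑ k, |(N n k ω : ℝ) / (q n : ℝ) - (lam (C n k)).toReal|
      ≤ 1 / ((m : ℝ) + 1) := by
    rw [one_div_mul_eq_div, div_le_iff₀ (hrpos n)]
    linarith
  rw [Real.norm_eq_abs, abs_of_nonneg (mul_nonneg (le_of_lt (one_div_pos.mpr (hrpos n))) hS0)]
  exact lt_of_le_of_lt h2 hm
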